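/- arXiv:math/9808037 — 2 statements merged into one kernel-verified Lean document; each statement's English description precedes it below -/
import Mathlib

section
/- Let k be a field, H a Hopf algebra over k with comultiplication Δ, counit ε and antipode S. Let V be a finite-dimensional k-vector space, ρ : H → End_k(V) a k-algebra homomorphism making V an H-module, and let g ∈ End_k(V) be invertible with ρ(S(S(a))) = g ∘ ρ(a) ∘ g⁻¹ for all a ∈ H. Then the linear functional End_k(V) → k, L ↦ tr(L ∘ g), is an invariant integral for the canonical H-action on End_k(V): for every a ∈ H with Δ(a) = Σ a₍₁₎ ⊗ a₍₂₎ and every L ∈ End_k(V), Σ tr(ρ(a₍₁₎) ∘ L ∘ ρ(S(a₍₂₎)) ∘ g) = ε(a)·tr(L ∘ g). -/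
open HopfAlgebra Coalgebra TensorProduct

section AuxiliaryHopf
variable {k H : Type*} [Field k] [Ring H] [HopfAlgebra k H]

noncomputable def mulRepr {ι κ : Type*} {a b : H} (ra : Coalgebra.Repr k a ι) (rb : Coalgebra.Repr k b κ) :
    Coalgebra.Repr k (a * b) (ι × κ) where
  index := ra.index ×ˢ rb.index
  left := fun p => ra.left p.1 * rb.left p.2
  right := fun p => ra.right p.1 * rb.right p.2
  eq := by
    rw [Finset.sum_product, Bialgebra.comul_mul, ← ra.eq, ← rb.eq, Finset.sum_mul_sum]
    simp [Algebra.TensorProduct.tmul_mul_tmul]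

noncomputable def mul3 : H ⊗[k] (H ⊗[k] H) →ₗ[k] H :=
  LinearMap.mul' k H ∘ₗ LinearMap.lTensor H (LinearMap.mul' k H)

@[simp] lemma mul3_tmul (x y z : H) :
    mul3 (x ⊗ₜ[k] (y ⊗ₜ[k] z)) = x * (y * z) := by
  simp [mul3]

lemma sum_counit_smul {ι : Type*} {a : H} (r : Coalgebra.Repr k a ι) :
    ∑ i ∈ r.index, counit (R := k) (r.left i) • r.right i = a := by
  have h := sum_counit_tmul_eq (R := k) r
  apply_fun TensorProduct.lid k H at h
  simpa only [map_sum, _root_.TensorProduct.lid_tmul, one_smul] using h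

lemma sum_smul_counit {ι : Type*} {a : H} (r : Coalgebra.Repr k a ι) :
    ∑ i ∈ r.index, counit (R := k) (r.right i) • r.left i = a := by
  have h := sum_tmul_counit_eq (R := k) r
  apply_fun TensorProduct.rid k H at h
  simpa only [map_sum, _root_.TensorProduct.rid_tmul, one_smul] using h

lemma antipode_one' : antipode (R := k) (1 : H) = 1 := by
  have h := sum_antipode_mul_eq_algebraMap_counit (R := k) (A := H) (a := (1 : H))
    (repr := ⟨({0} : Finset (Fin 1)), fun _ => (1 : H), fun _ => (1 : H), by
      simp [Algebra.TensorProduct.one_def]⟩)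
  simpa using h

lemma claim2 {ι κ : Type*} {x y : H} (rx : Coalgebra.Repr k x ι) (ry : Coalgebra.Repr k y κ) :
    ∑ m ∈ rx.index, ∑ n ∈ ry.index,
      (rx.left m * ry.left n) *
        (antipode (R := k) (ry.right n) * antipode (R := k) (rx.right m))
      = algebraMap k H (counit (R := k) x * counit (R := k) y) := by
  have inner : ∀ m, ∑ n ∈ ry.index,
      (rx.left m * ry.left n) *
        (antipode (R := k) (ry.right n) * antipode (R := k) (rx.right m))
      = counit (R := k) y • (rx.left m * antipode (R := k) (rx.right m)) := by
    intro m
    have : ∀ n, (rx.left m * ry.left n) *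
        (antipode (R := k) (ry.right n) * antipode (R := k) (rx.right m))
        = rx.left m * (ry.left n * antipode (R := k) (ry.right n)) *
            antipode (R := k) (rx.right m) := by
      intro n; noncomm_ring
    rw [Finset.sum_congr rfl fun n _ => this n]
    rw [← Finset.sum_mul, ← Finset.mul_sum, sum_mul_antipode_eq_algebraMap_counit]
    simp [Algebra.algebraMap_eq_smul_one, mul_smul_comm, smul_mul_assoc]
  rw [Finset.sum_congr rfl fun m _ => inner m, ← Finset.smul_sum, sum_mul_antipode_eq_algebraMap_counit]
  rw [Algebra.smul_def, ← map_mul, mul_comm, map_mul]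

lemma sum4_comm {ι₁ ι₂ ι₃ ι₄ : Type*} (s₁ : Finset ι₁) (s₂ : Finset ι₂)
    (s₃ : ι₁ → Finset ι₃) (s₄ : ι₂ → Finset ι₄) (f : ι₁ → ι₂ → ι₃ → ι₄ → H) :
    ∑ j ∈ s₂, ∑ n ∈ s₄ j, ∑ i ∈ s₁, ∑ m ∈ s₃ i, f i j m n
      = ∑ i ∈ s₁, ∑ j ∈ s₂, ∑ m ∈ s₃ i, ∑ n ∈ s₄ j, f i j m n := by
  calc ∑ j ∈ s₂, ∑ n ∈ s₄ j, ∑ i ∈ s₁, ∑ m ∈ s₃ i, f i j m n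
      = ∑ j ∈ s₂, ∑ i ∈ s₁, ∑ n ∈ s₄ j, ∑ m ∈ s₃ i, f i j m n :=
        Finset.sum_congr rfl fun j _ => Finset.sum_comm
    _ = ∑ i ∈ s₁, ∑ j ∈ s₂, ∑ n ∈ s₄ j, ∑ m ∈ s₃ i, f i j m n := Finset.sum_comm
    _ = ∑ i ∈ s₁, ∑ j ∈ s₂, ∑ m ∈ s₃ i, ∑ n ∈ s₄ j, f i j m n :=
        Finset.sum_congr rfl fun i _ => Finset.sum_congr rfl fun j _ => Finset.sum_comm

lemma sum4_comm' {ι₁ ι₂ ι₃ ι₄ : Type*} (s₁ : Finset ι₁) (s₂ : Finset ι₂)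
    (s₃ : ι₁ → Finset ι₃) (s₄ : ι₂ → Finset ι₄) (f : ι₁ → ι₂ → ι₃ → ι₄ → H) :
    ∑ i ∈ s₁, ∑ j ∈ s₂, ∑ m ∈ s₃ i, ∑ n ∈ s₄ j, f i j m n
      = ∑ i ∈ s₁, ∑ m ∈ s₃ i, ∑ j ∈ s₂, ∑ n ∈ s₄ j, f i j m n :=
  Finset.sum_congr rfl fun i _ => Finset.sum_comm

lemma antipode_mul_antidistrib' (a b : H) :
    antipode (R := k) (a * b) = antipode (R := k) b * antipode (R := k) a := by
  classical
  let ra := ℛ k a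
  let rb := ℛ k b
  let rla : (i : ra.ι) → Coalgebra.Repr k (ra.left i) (H × H) := fun i => ℛ k (ra.left i)
  let rra : (i : ra.ι) → Coalgebra.Repr k (ra.right i) (H × H) := fun i => ℛ k (ra.right i)
  let rlb : (j : rb.ι) → Coalgebra.Repr k (rb.left j) (H × H) := fun j => ℛ k (rb.left j)
  let rrb : (j : rb.ι) → Coalgebra.Repr k (rb.right j) (H × H) := fun j => ℛ k (rb.right j)
  -- the middle expression
  set E : H := ∑ j ∈ rb.index, ∑ n ∈ (rrb j).index, ∑ i ∈ ra.index, ∑ m ∈ (rra i).index,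
      antipode (R := k) (ra.left i * rb.left j) *
        (((rra i).left m * (rrb j).left n) *
          (antipode (R := k) ((rrb j).right n) * antipode (R := k) ((rra i).right m)))
    with hE
  -- E = antipode (a * b)
  have hE1 : E = antipode (R := k) (a * b) := by
    rw [hE]
    refine (sum4_comm _ _ _ _ _).trans ?_
    have heval : ∀ i ∈ ra.index, ∀ j ∈ rb.index,
        ∑ m ∈ (rra i).index, ∑ n ∈ (rrb j).index,
          antipode (R := k) (ra.left i * rb.left j) *
            (((rra i).left m * (rrb j).left n) *
              (antipode (R := k) ((rrb j).right n) * antipode (R := k) ((rra i).right m)))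
          = (counit (R := k) (ra.right i) * counit (R := k) (rb.right j)) •
              antipode (R := k) (ra.left i * rb.left j) := by
      intro i _ j _
      rw [Finset.sum_congr rfl fun m _ => (Finset.mul_sum _ _ _).symm, ← Finset.mul_sum,
        claim2 (rra i) (rrb j), ← Algebra.commutes, ← Algebra.smul_def]
    refine (Finset.sum_congr rfl fun i hi => Finset.sum_congr rfl fun j hj => heval i hi j hj).trans ?_
    conv_rhs => rw [← sum_smul_counit ra, ← sum_smul_counit rb]
    rw [Finset.sum_mul_sum, map_sum]
    refine Finset.sum_congr rfl fun i _ => ?_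
    rw [map_sum]
    refine Finset.sum_congr rfl fun j _ => ?_
    rw [smul_mul_smul_comm, map_smul]
  -- E = antipode b * antipode a
  have hE2 : E = antipode (R := k) b * antipode (R := k) a := by
    have stepA : ∀ (Y₁ Y₂ Y₃ : H),
        ∑ i ∈ ra.index, ∑ m ∈ (rra i).index,
          antipode (R := k) (ra.left i * Y₁) *
            (((rra i).left m * Y₂) *
              (antipode (R := k) Y₃ * antipode (R := k) ((rra i).right m)))
        = ∑ i ∈ ra.index, ∑ m ∈ (rla i).index,
          antipode (R := k) ((rla i).left m * Y₁) *
            (((rla i).right m * Y₂) *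
              (antipode (R := k) Y₃ * antipode (R := k) (ra.right i))) := by
      intro Y₁ Y₂ Y₃
      have h := congrArg (mul3 (k := k) (H := H))
        (sum_map_tmul_tmul_eq ((antipode (R := k) : H →ₗ[k] H) ∘ₗ LinearMap.mulRight k Y₁)
          (LinearMap.mulRight k Y₂)
          (LinearMap.mulLeft k (antipode (R := k) Y₃) ∘ₗ (antipode (R := k) : H →ₗ[k] H))
          a (repr := ra) (a₁ := rla) (a₂ := rra))
      simpa only [map_sum, mul3_tmul, LinearMap.comp_apply, LinearMap.mulRight_apply,
        LinearMap.mulLeft_apply] using h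
    have stepB : ∀ (X₁ X₂ X₃ : H),
        ∑ j ∈ rb.index, ∑ n ∈ (rrb j).index,
          antipode (R := k) (X₁ * rb.left j) *
            ((X₂ * (rrb j).left n) *
              (antipode (R := k) ((rrb j).right n) * antipode (R := k) X₃))
        = ∑ j ∈ rb.index, ∑ n ∈ (rlb j).index,
          antipode (R := k) (X₁ * (rlb j).left n) *
            ((X₂ * (rlb j).right n) *
              (antipode (R := k) (rb.right j) * antipode (R := k) X₃)) := by
      intro X₁ X₂ X₃
      have h := congrArg (mul3 (k := k) (H := H))
        (sum_map_tmul_tmul_eq ((antipode (R := k) : H →ₗ[k] H) ∘ₗ LinearMap.mulLeft k X₁)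
          (LinearMap.mulLeft k X₂)
          (LinearMap.mulRight k (antipode (R := k) X₃) ∘ₗ (antipode (R := k) : H →ₗ[k] H))
          b (repr := rb) (a₁ := rlb) (a₂ := rrb))
      simpa only [map_sum, mul3_tmul, LinearMap.comp_apply, LinearMap.mulRight_apply,
        LinearMap.mulLeft_apply] using h
    calc E = ∑ j ∈ rb.index, ∑ n ∈ (rrb j).index, ∑ i ∈ ra.index, ∑ m ∈ (rla i).index,
          antipode (R := k) ((rla i).left m * rb.left j) *
            (((rla i).right m * (rrb j).left n) *
              (antipode (R := k) ((rrb j).right n) * antipode (R := k) (ra.right i))) := by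
          rw [hE]
          exact Finset.sum_congr rfl fun j _ => Finset.sum_congr rfl fun n _ =>
            stepA (rb.left j) ((rrb j).left n) ((rrb j).right n)
      _ = ∑ i ∈ ra.index, ∑ m ∈ (rla i).index, ∑ j ∈ rb.index, ∑ n ∈ (rrb j).index,
          antipode (R := k) ((rla i).left m * rb.left j) *
            (((rla i).right m * (rrb j).left n) *
              (antipode (R := k) ((rrb j).right n) * antipode (R := k) (ra.right i))) :=
          (sum4_comm _ _ _ _ _).trans (sum4_comm' _ _ _ _ _)
      _ = ∑ i ∈ ra.index, ∑ m ∈ (rla i).index, ∑ j ∈ rb.index, ∑ n ∈ (rlb j).index,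
          antipode (R := k) ((rla i).left m * (rlb j).left n) *
            (((rla i).right m * (rlb j).right n) *
              (antipode (R := k) (rb.right j) * antipode (R := k) (ra.right i))) := by
          exact Finset.sum_congr rfl fun i _ => Finset.sum_congr rfl fun m _ =>
            stepB ((rla i).left m) ((rla i).right m) (ra.right i)
      _ = ∑ i ∈ ra.index, ∑ j ∈ rb.index, ∑ m ∈ (rla i).index, ∑ n ∈ (rlb j).index,
          antipode (R := k) ((rla i).left m * (rlb j).left n) *
            (((rla i).right m * (rlb j).right n) *
              (antipode (R := k) (rb.right j) * antipode (R := k) (ra.right i))) :=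
          Finset.sum_congr rfl fun i _ => Finset.sum_comm
      _ = ∑ i ∈ ra.index, ∑ j ∈ rb.index,
            (counit (R := k) (ra.left i) * counit (R := k) (rb.left j)) •
              (antipode (R := k) (rb.right j) * antipode (R := k) (ra.right i)) := by
          refine Finset.sum_congr rfl fun i _ => Finset.sum_congr rfl fun j _ => ?_
          have hassoc : ∀ m n,
              antipode (R := k) ((rla i).left m * (rlb j).left n) *
                (((rla i).right m * (rlb j).right n) *
                  (antipode (R := k) (rb.right j) * antipode (R := k) (ra.right i)))
              = (antipode (R := k) ((rla i).left m * (rlb j).left n) *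
                  ((rla i).right m * (rlb j).right n)) *
                  (antipode (R := k) (rb.right j) * antipode (R := k) (ra.right i)) := by
            intro m n; exact (mul_assoc _ _ _).symm
          rw [Finset.sum_congr rfl fun m _ => Finset.sum_congr rfl fun n _ => hassoc m n]
          rw [Finset.sum_congr rfl fun m _ => (Finset.sum_mul _ _ _).symm, ← Finset.sum_mul]
          have hinner : ∑ m ∈ (rla i).index, ∑ n ∈ (rlb j).index,
              antipode (R := k) ((rla i).left m * (rlb j).left n) *
                ((rla i).right m * (rlb j).right n)
              = algebraMap k H (counit (R := k) (ra.left i * rb.left j)) := by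
            have h := sum_antipode_mul_eq_algebraMap_counit (R := k) (repr := mulRepr (rla i) (rlb j))
            rw [← h]
            exact (Finset.sum_product (rla i).index (rlb j).index
              (fun p => antipode (R := k) ((rla i).left p.1 * (rlb j).left p.2) *
                ((rla i).right p.1 * (rlb j).right p.2))).symm
          rw [hinner, Bialgebra.counit_mul, ← Algebra.smul_def]
      _ = antipode (R := k) b * antipode (R := k) a := by
          have hSa : ∑ i ∈ ra.index, counit (R := k) (ra.left i) • antipode (R := k) (ra.right i)
              = antipode (R := k) a := by
            simp only [← map_smul, ← map_sum, _root_.sum_counit_smul]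
          have hSb : ∑ j ∈ rb.index, counit (R := k) (rb.left j) • antipode (R := k) (rb.right j)
              = antipode (R := k) b := by
            simp only [← map_smul, ← map_sum, _root_.sum_counit_smul]
          rw [← hSa, ← hSb, Finset.sum_mul_sum, Finset.sum_comm]
          refine Finset.sum_congr rfl fun i _ => Finset.sum_congr rfl fun j _ => ?_
          rw [smul_mul_smul_comm, mul_comm]
  rw [← hE1, hE2]



variable {k H : Type*} [Field k] [Ring H] [HopfAlgebra k H] in
lemma sum_antipode_antipode_eq {ι : Type*} {a : H} (repr : Coalgebra.Repr k a ι) :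
    ∑ i ∈ repr.index,
        antipode (R := k) (repr.right i) * antipode (R := k) (antipode (R := k) (repr.left i))
      = algebraMap k H (counit (R := k) a) := by
  rw [Finset.sum_congr rfl fun i _ =>
    (antipode_mul_antidistrib' (k := k) (antipode (R := k) (repr.left i)) (repr.right i)).symm]
  rw [← map_sum, sum_antipode_mul_eq_algebraMap_counit, Algebra.algebraMap_eq_smul_one, map_smul,
    antipode_one']

end AuxiliaryHopf

/-- For an `H`-module `V` (action `ρ`) and an invertible `g` intertwining `S²` with
conjugation by `g`, the functional `L ↦ tr (L ∘ g)` is an invariant integral on `End V`: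
`Σ tr (ρ(a₍₁₎) ∘ L ∘ ρ(S a₍₂₎) ∘ g) = ε(a) · tr (L ∘ g)`. -/
theorem trace_invariant_integral
    {k H V : Type*} [Field k] [Ring H] [HopfAlgebra k H]
    [AddCommGroup V] [Module k V] [FiniteDimensional k V]
    (ρ : H →ₐ[k] Module.End k V) (g : (Module.End k V)ˣ)
    (hg : ∀ a : H, ρ (antipode (R := k) (antipode (R := k) a)) = ↑g * ρ a * ↑g⁻¹) :
    ∀ (a : H) (ι : Type _) (repr : Coalgebra.Repr k a ι) (L : Module.End k V),
      ∑ i ∈ repr.index,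
          LinearMap.trace k V (ρ (repr.left i) * L * ρ (antipode (R := k) (repr.right i)) * ↑g) =
        Coalgebra.counit (R := k) a * LinearMap.trace k V (L * ↑g) := by
  intro a ι repr L
  have hg' : ∀ b : H, (↑g : Module.End k V) * ρ b
      = ρ (antipode (R := k) (antipode (R := k) b)) * ↑g := by
    intro b
    rw [hg b, mul_assoc, mul_assoc, Units.inv_mul, mul_one]
  have step : ∀ i,
      LinearMap.trace k V (ρ (repr.left i) * L * ρ (antipode (R := k) (repr.right i)) * ↑g)
      = LinearMap.trace k V (L * ρ (antipode (R := k) (repr.right i) *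
          antipode (R := k) (antipode (R := k) (repr.left i))) * ↑g) := by
    intro i
    rw [show ρ (repr.left i) * L * ρ (antipode (R := k) (repr.right i)) * ↑g
        = ρ (repr.left i) * (L * ρ (antipode (R := k) (repr.right i)) * ↑g) by noncomm_ring,
      LinearMap.trace_mul_comm]
    rw [show L * ρ (antipode (R := k) (repr.right i)) * ↑g * ρ (repr.left i)
        = L * (ρ (antipode (R := k) (repr.right i)) * (↑g * ρ (repr.left i))) by noncomm_ring,
      hg' (repr.left i)]
    rw [show L * (ρ (antipode (R := k) (repr.right i)) *
          (ρ (antipode (R := k) (antipode (R := k) (repr.left i))) * ↑g))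
        = L * (ρ (antipode (R := k) (repr.right i)) *
            ρ (antipode (R := k) (antipode (R := k) (repr.left i)))) * ↑g by noncomm_ring,
      ← map_mul]
  rw [Finset.sum_congr rfl fun i _ => step i]
  rw [Finset.sum_congr rfl fun i _ => congrArg (LinearMap.trace k V)
    (show L * ρ (antipode (R := k) (repr.right i) *
        antipode (R := k) (antipode (R := k) (repr.left i))) * ↑g
      = L * (ρ (antipode (R := k) (repr.right i) *
          antipode (R := k) (antipode (R := k) (repr.left i))) * ↑g) from by rw [mul_assoc])]
  rw [← map_sum, ← Finset.mul_sum, ← Finset.sum_mul, ← map_sum, sum_antipode_antipode_eq repr,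
    AlgHom.commutes, Algebra.algebraMap_eq_smul_one, smul_mul_assoc, one_mul, mul_smul_comm,
    map_smul, smul_eq_mul]
end

section
/- Let h > 0 be real and let 𝓛 = 𝓛₁ ∪ 𝓛₂ ∪ 𝓛₃ ⊂ ℂ, where 𝓛₁ = {l : −1/2 < Re l < 0, Im l = 0}, 𝓛₂ = {l : Re l = −1/2, 0 ≤ Im l < π/h}, 𝓛₃ = {l : Re l > −1/2, Im l = π/h}. Let V^{(l)} be the space of finitely supported functions ℤ → ℂ with basis (e_k), equipped with X⁺ e_k = (sinh((k−l)h/2)/sinh(h/2)) e_{k+1}, X⁻ e_k = −(sinh((k+l)h/2)/sinh(h/2)) e_{k−1}, H e_k = 2k e_k. Then for every l ∈ 𝓛 there exists a unique sesquilinear form B on V^{(l)} (linear in the first argument, conjugate-linear in the second, with B(v,u) = conj(B(u,v))) such that B(e₀,e₀) = 1 and B is invariant: B(X⁺u, v) = −B(u, X⁻v), B(X⁻u, v) = −B(u, X⁺v) and B(Hu, v) = B(u, Hv) for all u, v ∈ V^{(l)}. Moreover this form is diagonal and positive definite: B(e_i, e_j) = 0 for i ≠ j and B(e_k, e_k) >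 0 for every k ∈ ℤ. -/
open Complex



/-- The operator `X⁺ e_k = (sinh((k−l)h/2)/sinh(h/2)) e_{k+1}` on `V^{(l)} = ℤ →₀ ℂ`. -/
noncomputable def Xplus (h : ℝ) (l : ℂ) : (ℤ →₀ ℂ) →ₗ[ℂ] (ℤ →₀ ℂ) :=
  Finsupp.lsum ℂ fun k =>
    (Complex.sinh (((k : ℂ) - l) * h / 2) / Complex.sinh (h / 2)) • Finsupp.lsingle (k + 1)

/-- The operator `X⁻ e_k = −(sinh((k+l)h/2)/sinh(h/2)) e_{k−1}` on `V^{(l)} = ℤ →₀ ℂ`. -/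
noncomputable def Xminus (h : ℝ) (l : ℂ) : (ℤ →₀ ℂ) →ₗ[ℂ] (ℤ →₀ ℂ) :=
  Finsupp.lsum ℂ fun k =>
    (-(Complex.sinh (((k : ℂ) + l) * h / 2) / Complex.sinh (h / 2))) • Finsupp.lsingle (k - 1)

/-- The operator `H e_k = 2k e_k` on `V^{(l)} = ℤ →₀ ℂ`. -/
noncomputable def Hop : (ℤ →₀ ℂ) →ₗ[ℂ] (ℤ →₀ ℂ) :=
  Finsupp.lsum ℂ fun k => ((2 * k : ℤ) : ℂ) • Finsupp.lsingle k



lemma aux_sinh_ne_zero_of_re_ne_zero (z : ℂ) (hz : z.re ≠ 0) : Complex.sinh z ≠ 0 := by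
  intro h0
  have he : Complex.exp z = Complex.exp (-z) := by
    have : (Complex.exp z - Complex.exp (-z)) / 2 = 0 := h0
    field_simp at this
    linear_combination this
  have habs : Real.exp z.re = Real.exp (-z).re := by
    rw [← Complex.norm_exp, ← Complex.norm_exp, he]
  simp only [Complex.neg_re, Real.exp_eq_exp] at habs
  apply hz; linarith

lemma aux_sinh_add_mul_I (a b : ℝ) :
    Complex.sinh (a + b * I) = (Real.sinh a * Real.cos b : ℝ) + (Real.cosh a * Real.sin b : ℝ) * I := by
  rw [Complex.sinh_add, Complex.sinh_mul_I, Complex.cosh_mul_I]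
  push_cast [← Complex.ofReal_sinh, ← Complex.ofReal_cosh, ← Complex.ofReal_sin, ← Complex.ofReal_cos]
  ring

noncomputable def invA (h : ℝ) (l : ℂ) (k : ℤ) : ℂ := Complex.sinh (((k : ℂ) - l) * h / 2)
noncomputable def invC (h : ℝ) (l : ℂ) (k : ℤ) : ℂ := Complex.sinh (((k : ℂ) + l) * h / 2)

lemma key (h : ℝ) (hh : 0 < h) (l : ℂ)
    (hl : (-(1 : ℝ) / 2 < l.re ∧ l.re < 0 ∧ l.im = 0) ∨
          (l.re = -(1 : ℝ) / 2 ∧ 0 ≤ l.im ∧ l.im < Real.pi / h) ∨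
          (-(1 : ℝ) / 2 < l.re ∧ l.im = Real.pi / h)) (k : ℤ) :
    invA h l k ≠ 0 ∧ invC h l k ≠ 0 ∧
      ∃ ρ : ℝ, 0 < ρ ∧ (starRingEnd ℂ) (invC h l (k + 1)) = ρ * invA h l k := by
  rcases hl with ⟨hx1, hx2, him⟩ | ⟨hre, _, _⟩ | ⟨hx1, him⟩
  · -- case 1: l real in (-1/2, 0)
    set x := l.re with hxdef
    have hlx : l = (x : ℂ) := by
      apply Complex.ext <;> simp [him, hxdef]
    have eA : ∀ m : ℤ, invA h l m = ((Real.sinh (((m : ℝ) - x) * h / 2) : ℝ) : ℂ) := by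
      intro m
      rw [invA, hlx, show ((m : ℂ) - (x : ℂ)) * (h : ℂ) / 2 = ((((m : ℝ) - x) * h / 2 : ℝ) : ℂ) by
        push_cast; ring, Complex.ofReal_sinh]
    have eC : ∀ m : ℤ, invC h l m = ((Real.sinh (((m : ℝ) + x) * h / 2) : ℝ) : ℂ) := by
      intro m
      rw [invC, hlx, show ((m : ℂ) + (x : ℂ)) * (h : ℂ) / 2 = ((((m : ℝ) + x) * h / 2 : ℝ) : ℂ) by
        push_cast; ring, Complex.ofReal_sinh]
    have hint : ∀ m : ℤ, ((m : ℝ) - x ≠ 0) ∧ ((m : ℝ) + x ≠ 0) := by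
      intro m
      constructor
      · rcases lt_or_ge m 0 with hm | hm
        · have : (m : ℝ) ≤ -1 := by exact_mod_cast (show m ≤ -1 by omega)
          nlinarith
        · have : (0 : ℝ) ≤ (m : ℝ) := by exact_mod_cast hm
          nlinarith
      · rcases lt_or_ge m 1 with hm | hm
        · have : (m : ℝ) ≤ 0 := by exact_mod_cast (show m ≤ 0 by omega)
          nlinarith
        · have : (1 : ℝ) ≤ (m : ℝ) := by exact_mod_cast hm
          nlinarith
    have hA : ∀ m : ℤ, invA h l m ≠ 0 := by
      intro m
      rw [eA m]
      exact_mod_cast Real.sinh_ne_zero.2 (mul_ne_zero (mul_ne_zero (hint m).1 hh.ne') (by norm_num))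
    have hC : ∀ m : ℤ, invC h l m ≠ 0 := by
      intro m
      rw [eC m]
      exact_mod_cast Real.sinh_ne_zero.2 (mul_ne_zero (mul_ne_zero (hint m).2 hh.ne') (by norm_num))
    refine ⟨hA k, hC k, Real.sinh (((k : ℝ) + 1 + x) * h / 2) / Real.sinh (((k : ℝ) - x) * h / 2),
      ?_, ?_⟩
    · have hd : Real.sinh (((k : ℝ) - x) * h / 2) ≠ 0 :=
        Real.sinh_ne_zero.2 (mul_ne_zero (mul_ne_zero (hint k).1 hh.ne') (by norm_num))
      rcases le_or_gt 0 k with hk | hk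
      · have hk' : (0 : ℝ) ≤ (k : ℝ) := by exact_mod_cast hk
        have h1 : 0 < ((k : ℝ) + 1 + x) * h / 2 := by nlinarith
        have h2 : 0 < ((k : ℝ) - x) * h / 2 := by nlinarith
        exact div_pos (Real.sinh_pos_iff.2 h1) (Real.sinh_pos_iff.2 h2)
      · have hk' : (k : ℝ) ≤ -1 := by exact_mod_cast (show k ≤ -1 by omega)
        have h1 : ((k : ℝ) + 1 + x) * h / 2 < 0 := by nlinarith
        have h2 : ((k : ℝ) - x) * h / 2 < 0 := by nlinarith
        exact div_pos_iff.2 (Or.inr ⟨Real.sinh_neg_iff.2 h1, Real.sinh_neg_iff.2 h2⟩)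
    · have hd : Real.sinh (((k : ℝ) - x) * h / 2) ≠ 0 :=
        Real.sinh_ne_zero.2 (mul_ne_zero (mul_ne_zero (hint k).1 hh.ne') (by norm_num))
      rw [eC (k + 1), eA k, Complex.conj_ofReal, ← Complex.ofReal_mul,
        show (((k + 1 : ℤ) : ℝ) + x) * h / 2 = ((k : ℝ) + 1 + x) * h / 2 by push_cast; ring]
      norm_cast
      field_simp
      rw [mul_div_cancel_right₀ _ (show Real.sinh (h * ((k:ℝ) - x) / 2) ≠ 0 by rwa [show h * ((k:ℝ) - x) / 2 = ((k:ℝ) - x) * h / 2 by ring])]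
  · -- case 2: Re l = -1/2
    have hconj : (starRingEnd ℂ) l = -1 - l := by
      apply Complex.ext <;> simp [hre] <;> ring
    have hre' : ∀ m : ℤ, (((m : ℂ) - l) * h / 2).re = ((m : ℝ) + 1/2) * h / 2 := by
      intro m
      rw [show ((m : ℂ) - l) * (h : ℂ) / 2 = ((h / 2 : ℝ) : ℂ) * ((m : ℂ) - l) by push_cast; ring]
      rw [Complex.re_ofReal_mul]
      simp [hre]
      ring
    have hre'' : ∀ m : ℤ, (((m : ℂ) + l) * h / 2).re = ((m : ℝ) - 1/2) * h / 2 := by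
      intro m
      rw [show ((m : ℂ) + l) * (h : ℂ) / 2 = ((h / 2 : ℝ) : ℂ) * ((m : ℂ) + l) by push_cast; ring]
      rw [Complex.re_ofReal_mul]
      simp [hre]
      ring
    have hhalf : ∀ m : ℤ, ((m : ℝ) + 1/2) ≠ 0 ∧ ((m : ℝ) - 1/2) ≠ 0 := by
      intro m
      constructor
      · rcases le_or_gt 0 m with hm | hm
        · have : (0 : ℝ) ≤ (m : ℝ) := by exact_mod_cast hm
          nlinarith
        · have : (m : ℝ) ≤ -1 := by exact_mod_cast (show m ≤ -1 by omega)
          nlinarith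
      · rcases le_or_gt 1 m with hm | hm
        · have : (1 : ℝ) ≤ (m : ℝ) := by exact_mod_cast hm
          nlinarith
        · have : (m : ℝ) ≤ 0 := by exact_mod_cast (show m ≤ 0 by omega)
          nlinarith
    have hc : (starRingEnd ℂ) (((k : ℂ) + 1 + l) * (h : ℂ) / 2) = ((k : ℂ) - l) * (h : ℂ) / 2 := by
      simp only [map_div₀, map_mul, map_add, map_one, map_ofNat, Complex.conj_ofReal,
        map_intCast, hconj]
      ring
    refine ⟨aux_sinh_ne_zero_of_re_ne_zero _ (by
        rw [hre' k]; exact mul_ne_zero (mul_ne_zero (hhalf k).1 hh.ne') (by norm_num)),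
      aux_sinh_ne_zero_of_re_ne_zero _ (by
        rw [hre'' k]; exact mul_ne_zero (mul_ne_zero (hhalf k).2 hh.ne') (by norm_num)),
      1, one_pos, ?_⟩
    rw [invC, invA, ← Complex.sinh_conj]
    push_cast
    rw [hc]
    simp
  · -- case 3: Im l = π/h
    set x := l.re with hxdef
    have hhc : (h : ℂ) ≠ 0 := Complex.ofReal_ne_zero.2 hh.ne'
    have hlx : l = (x : ℂ) + ((Real.pi / h : ℝ) : ℂ) * I := by
      rw [← him]; exact (Complex.re_add_im l).symm
    have eA : ∀ m : ℤ, invA h l m = -((Real.cosh (((m : ℝ) - x) * h / 2) : ℝ) : ℂ) * I := by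
      intro m
      rw [invA, hlx, show ((m : ℂ) - ((x : ℂ) + ((Real.pi / h : ℝ) : ℂ) * I)) * (h : ℂ) / 2
          = ((((m : ℝ) - x) * h / 2 : ℝ) : ℂ) + ((-(Real.pi / 2) : ℝ) : ℂ) * I by
        push_cast; field_simp; ring]
      rw [aux_sinh_add_mul_I]
      simp [Real.cos_pi_div_two, Real.sin_pi_div_two]
    have eC : ∀ m : ℤ, invC h l m = ((Real.cosh (((m : ℝ) + x) * h / 2) : ℝ) : ℂ) * I := by
      intro m
      rw [invC, hlx, show ((m : ℂ) + ((x : ℂ) + ((Real.pi / h : ℝ) : ℂ) * I)) * (h : ℂ) / 2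
          = ((((m : ℝ) + x) * h / 2 : ℝ) : ℂ) + (((Real.pi / 2) : ℝ) : ℂ) * I by
        push_cast; field_simp; ring]
      rw [aux_sinh_add_mul_I]
      simp [Real.cos_pi_div_two, Real.sin_pi_div_two]
    have hd : ((Real.cosh (((k : ℝ) - x) * h / 2) : ℝ) : ℂ) ≠ 0 :=
      Complex.ofReal_ne_zero.2 (Real.cosh_pos _).ne'
    refine ⟨by
        rw [eA k]
        simp only [neg_mul, neg_ne_zero, mul_ne_zero_iff]
        exact ⟨Complex.ofReal_ne_zero.2 (Real.cosh_pos _).ne', Complex.I_ne_zero⟩,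
      by
        rw [eC k]
        exact mul_ne_zero (Complex.ofReal_ne_zero.2 (Real.cosh_pos _).ne') Complex.I_ne_zero,
      Real.cosh (((k : ℝ) + 1 + x) * h / 2) / Real.cosh (((k : ℝ) - x) * h / 2),
      div_pos (Real.cosh_pos _) (Real.cosh_pos _), ?_⟩
    rw [eC (k + 1), eA k,
      show ((((k + 1 : ℤ) : ℝ)) + x) * h / 2 = ((k : ℝ) + 1 + x) * h / 2 by push_cast; ring]
    simp only [map_mul, Complex.conj_ofReal, Complex.conj_I, Complex.ofReal_div]
    rw [div_mul_eq_mul_div, eq_div_iff hd]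
    ring


noncomputable def bfun (ρ : ℤ → ℝ) : ℤ → ℝ := fun k =>
  if 0 ≤ k then ∏ i ∈ Finset.range k.toNat, ρ i
  else (∏ i ∈ Finset.range (-k).toNat, ρ (-(i : ℤ) - 1))⁻¹

lemma bfun_zero (ρ : ℤ → ℝ) : bfun ρ 0 = 1 := by simp [bfun]

lemma bfun_pos (ρ : ℤ → ℝ) (hρ : ∀ k, 0 < ρ k) (k : ℤ) : 0 < bfun ρ k := by
  rw [bfun]
  split
  · exact Finset.prod_pos fun i _ => hρ _
  · exact inv_pos.2 (Finset.prod_pos fun i _ => hρ _)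

lemma bfun_succ (ρ : ℤ → ℝ) (hρ : ∀ k, 0 < ρ k) (k : ℤ) :
    bfun ρ (k + 1) = ρ k * bfun ρ k := by
  rcases le_or_gt 0 k with hk | hk
  · rw [bfun, bfun, if_pos hk, if_pos (by omega)]
    rw [show (k + 1).toNat = k.toNat + 1 by omega, Finset.prod_range_succ,
      show ((k.toNat : ℤ)) = k from by omega]
    ring
  · rcases eq_or_lt_of_le (show k ≤ -1 by omega) with hk1 | hk1
    · subst hk1
      rw [show (-1 : ℤ) + 1 = 0 by ring, bfun_zero, bfun, if_neg (by omega)]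
      norm_num [Finset.prod_range_one]
      exact (mul_inv_cancel₀ (hρ (-1)).ne').symm
    · rw [bfun, bfun, if_neg (by omega), if_neg (by omega)]
      rw [show (-k).toNat = (-(k+1)).toNat + 1 by omega, Finset.prod_range_succ]
      rw [show (-(((-(k+1)).toNat : ℤ)) - 1) = k by omega]
      rw [mul_inv]
      rw [mul_comm, mul_assoc, inv_mul_cancel₀ (hρ k).ne']
      ring


lemma Xplus_single (h : ℝ) (l : ℂ) (k : ℤ) (c : ℂ) :
    Xplus h l (Finsupp.single k c) =
      Finsupp.single (k + 1) (invA h l k / Complex.sinh (h / 2) * c) := by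
  rw [Xplus, Finsupp.lsum_single, LinearMap.smul_apply, Finsupp.lsingle_apply,
    Finsupp.smul_single, invA, smul_eq_mul]

lemma Xminus_single (h : ℝ) (l : ℂ) (k : ℤ) (c : ℂ) :
    Xminus h l (Finsupp.single k c) =
      Finsupp.single (k - 1) (-(invC h l k / Complex.sinh (h / 2)) * c) := by
  rw [Xminus, Finsupp.lsum_single, LinearMap.smul_apply, Finsupp.lsingle_apply,
    Finsupp.smul_single, invC, smul_eq_mul]

lemma Hop_single (k : ℤ) (c : ℂ) :
    Hop (Finsupp.single k c) = Finsupp.single k (((2 * k : ℤ) : ℂ) * c) := by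
  rw [Hop, Finsupp.lsum_single, LinearMap.smul_apply, Finsupp.lsingle_apply,
    Finsupp.smul_single, smul_eq_mul]

/-- conjugate-evaluation at `i` as a semilinear map -/
noncomputable def cproj (i : ℤ) : (ℤ →₀ ℂ) →ₛₗ[starRingEnd ℂ] ℂ where
  toFun v := (starRingEnd ℂ) (v i)
  map_add' x y := by simp
  map_smul' c x := by simp

noncomputable def Bform (b : ℤ → ℝ) :
    (ℤ →₀ ℂ) →ₗ[ℂ] (ℤ →₀ ℂ) →ₛₗ[starRingEnd ℂ] ℂ :=
  Finsupp.lsum ℂ fun i => LinearMap.toSpanSingleton ℂ _ ((b i : ℂ) • cproj i)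

lemma Bform_single (b : ℤ → ℝ) (i j : ℤ) (c d : ℂ) :
    Bform b (Finsupp.single i c) (Finsupp.single j d) =
      if i = j then c * (starRingEnd ℂ) d * (b i : ℂ) else 0 := by
  rw [Bform, Finsupp.lsum_single, LinearMap.toSpanSingleton_apply]
  simp only [LinearMap.smul_apply, smul_eq_mul, cproj, LinearMap.coe_mk, AddHom.coe_mk,
    Finsupp.single_apply]
  rcases eq_or_ne i j with rfl | hij
  · simp; ring
  · simp [hij, Ne.symm hij]


section Helpers

lemma form_ext {B C : (ℤ →₀ ℂ) →ₗ[ℂ] (ℤ →₀ ℂ) →ₛₗ[starRingEnd ℂ] ℂ}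
    (H : ∀ i j : ℤ, B (Finsupp.single i 1) (Finsupp.single j 1)
      = C (Finsupp.single i 1) (Finsupp.single j 1)) : B = C := by
  refine LinearMap.ext fun u => LinearMap.ext fun v => ?_
  induction u using Finsupp.induction_linear with
  | zero => simp
  | add f g hf hg => simp only [map_add, LinearMap.add_apply, hf, hg]
  | single i c =>
    induction v using Finsupp.induction_linear with
    | zero => simp
    | add f g hf hg => simp only [map_add, hf, hg]
    | single j d =>
      rw [show (Finsupp.single i c : ℤ →₀ ℂ) = c • Finsupp.single i 1 by
          rw [Finsupp.smul_single, smul_eq_mul, mul_one],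
        show (Finsupp.single j d : ℤ →₀ ℂ) = d • Finsupp.single j 1 by
          rw [Finsupp.smul_single, smul_eq_mul, mul_one]]
      simp only [map_smul, LinearMap.smul_apply, LinearMap.map_smulₛₗ, smul_eq_mul]
      rw [H]

lemma inv_ext {B : (ℤ →₀ ℂ) →ₗ[ℂ] (ℤ →₀ ℂ) →ₛₗ[starRingEnd ℂ] ℂ}
    {T T' : (ℤ →₀ ℂ) →ₗ[ℂ] (ℤ →₀ ℂ)}
    (H : ∀ i j : ℤ, B (T (Finsupp.single i 1)) (Finsupp.single j 1)
      = -B (Finsupp.single i 1) (T' (Finsupp.single j 1))) :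
    ∀ u v, B (T u) v = -B u (T' v) := by
  intro u v
  induction u using Finsupp.induction_linear generalizing v with
  | zero => simp
  | add f g hf hg => simp only [map_add, LinearMap.add_apply, hf, hg]; ring
  | single i c =>
    induction v using Finsupp.induction_linear with
    | zero => simp
    | add f g hf hg => simp only [map_add, hf, hg]; ring
    | single j d =>
      rw [show (Finsupp.single i c : ℤ →₀ ℂ) = c • Finsupp.single i 1 by
          rw [Finsupp.smul_single, smul_eq_mul, mul_one],
        show (Finsupp.single j d : ℤ →₀ ℂ) = d • Finsupp.single j 1 by
          rw [Finsupp.smul_single, smul_eq_mul, mul_one]]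
      simp only [map_smul, LinearMap.smul_apply, LinearMap.map_smulₛₗ, smul_eq_mul, H]
      ring

lemma inv_ext' {B : (ℤ →₀ ℂ) →ₗ[ℂ] (ℤ →₀ ℂ) →ₛₗ[starRingEnd ℂ] ℂ}
    {T T' : (ℤ →₀ ℂ) →ₗ[ℂ] (ℤ →₀ ℂ)}
    (H : ∀ i j : ℤ, B (T (Finsupp.single i 1)) (Finsupp.single j 1)
      = B (Finsupp.single i 1) (T' (Finsupp.single j 1))) :
    ∀ u v, B (T u) v = B u (T' v) := by
  intro u v
  induction u using Finsupp.induction_linear generalizing v with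
  | zero => simp
  | add f g hf hg => simp only [map_add, LinearMap.add_apply, hf, hg]
  | single i c =>
    induction v using Finsupp.induction_linear with
    | zero => simp
    | add f g hf hg => simp only [map_add, hf, hg]
    | single j d =>
      rw [show (Finsupp.single i c : ℤ →₀ ℂ) = c • Finsupp.single i 1 by
          rw [Finsupp.smul_single, smul_eq_mul, mul_one],
        show (Finsupp.single j d : ℤ →₀ ℂ) = d • Finsupp.single j 1 by
          rw [Finsupp.smul_single, smul_eq_mul, mul_one]]
      simp only [map_smul, LinearMap.smul_apply, LinearMap.map_smulₛₗ, smul_eq_mul, H]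

lemma herm_ext {B : (ℤ →₀ ℂ) →ₗ[ℂ] (ℤ →₀ ℂ) →ₛₗ[starRingEnd ℂ] ℂ}
    (H : ∀ i j : ℤ, B (Finsupp.single j 1) (Finsupp.single i 1)
      = (starRingEnd ℂ) (B (Finsupp.single i 1) (Finsupp.single j 1))) :
    ∀ u v, B v u = (starRingEnd ℂ) (B u v) := by
  intro u v
  induction u using Finsupp.induction_linear generalizing v with
  | zero => simp
  | add f g hf hg => simp only [map_add, LinearMap.add_apply, hf, hg]
  | single i c =>
    induction v using Finsupp.induction_linear with
    | zero => simp
    | add f g hf hg => simp only [map_add, LinearMap.add_apply, hf, hg]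
    | single j d =>
      rw [show (Finsupp.single i c : ℤ →₀ ℂ) = c • Finsupp.single i 1 by
          rw [Finsupp.smul_single, smul_eq_mul, mul_one],
        show (Finsupp.single j d : ℤ →₀ ℂ) = d • Finsupp.single j 1 by
          rw [Finsupp.smul_single, smul_eq_mul, mul_one]]
      simp only [map_smul, LinearMap.smul_apply, LinearMap.map_smulₛₗ, smul_eq_mul, map_mul,
        Complex.conj_conj]
      rw [H i j]
      ring

end Helpers


/-- For `l` in the set `𝓛 = 𝓛₁ ∪ 𝓛₂ ∪ 𝓛₃` there is a unique invariant hermitian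
sesquilinear form `B` on `V^{(l)}` with `B(e₀,e₀) = 1`; moreover any such form is
diagonal and positive definite on the basis `(e_k)`. -/
/- For `l` in the set `𝓛 = 𝓛₁ ∪ 𝓛₂ ∪ 𝓛₃` there is a unique invariant hermitian
sesquilinear form `B` on `V^{(l)}` with `B(e₀,e₀) = 1`; moreover any such form is
diagonal and positive definite on the basis `(e_k)`. -/
theorem exists_unique_invariant_scalar_product (h : ℝ) (hh : 0 < h) (l : ℂ)
    (hl : (-(1 : ℝ) / 2 < l.re ∧ l.re < 0 ∧ l.im = 0) ∨
          (l.re = -(1 : ℝ) / 2 ∧ 0 ≤ l.im ∧ l.im < Real.pi / h) ∨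
          (-(1 : ℝ) / 2 < l.re ∧ l.im = Real.pi / h)) :
    (∃! B : (ℤ →₀ ℂ) →ₗ[ℂ] (ℤ →₀ ℂ) →ₛₗ[starRingEnd ℂ] ℂ,
      (∀ u v : ℤ →₀ ℂ, B v u = (starRingEnd ℂ) (B u v)) ∧
      B (Finsupp.single 0 1) (Finsupp.single 0 1) = 1 ∧
      (∀ u v : ℤ →₀ ℂ, B (Xplus h l u) v = -B u (Xminus h l v)) ∧
      (∀ u v : ℤ →₀ ℂ, B (Xminus h l u) v = -B u (Xplus h l v)) ∧
      (∀ u v : ℤ →₀ ℂ, B (Hop u) v = B u (Hop v))) ∧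
    (∀ B : (ℤ →₀ ℂ) →ₗ[ℂ] (ℤ →₀ ℂ) →ₛₗ[starRingEnd ℂ] ℂ,
      ((∀ u v : ℤ →₀ ℂ, B v u = (starRingEnd ℂ) (B u v)) ∧
       B (Finsupp.single 0 1) (Finsupp.single 0 1) = 1 ∧
       (∀ u v : ℤ →₀ ℂ, B (Xplus h l u) v = -B u (Xminus h l v)) ∧
       (∀ u v : ℤ →₀ ℂ, B (Xminus h l u) v = -B u (Xplus h l v)) ∧
       (∀ u v : ℤ →₀ ℂ, B (Hop u) v = B u (Hop v))) →
      (∀ i j : ℤ, i ≠ j → B (Finsupp.single i 1) (Finsupp.single j 1) = 0) ∧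
      (∀ k : ℤ, ∃ r : ℝ, 0 < r ∧ B (Finsupp.single k 1) (Finsupp.single k 1) = r)) := by
  classical
  have hSr : (starRingEnd ℂ) (Complex.sinh (h / 2 : ℂ)) = Complex.sinh (h / 2 : ℂ) := by
    rw [show ((h : ℂ) / 2) = ((h / 2 : ℝ) : ℂ) by push_cast; ring, ← Complex.ofReal_sinh,
      Complex.conj_ofReal]
  have hS0 : Complex.sinh (h / 2 : ℂ) ≠ 0 := by
    rw [show ((h : ℂ) / 2) = ((h / 2 : ℝ) : ℂ) by push_cast; ring, ← Complex.ofReal_sinh]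
    exact_mod_cast Real.sinh_ne_zero.2 (by positivity : (0:ℝ) < h / 2).ne'
  have hρpos : ∀ k, 0 < (key h hh l hl k).2.2.choose :=
    fun k => (key h hh l hl k).2.2.choose_spec.1
  set ρ : ℤ → ℝ := fun k => (key h hh l hl k).2.2.choose with hρdef
  have hρeq : ∀ k, (starRingEnd ℂ) (invC h l (k + 1)) = (ρ k : ℝ) * invA h l k :=
    fun k => (key h hh l hl k).2.2.choose_spec.2
  have hA0 : ∀ k, invA h l k ≠ 0 := fun k => (key h hh l hl k).1
  have hC0 : ∀ k, invC h l k ≠ 0 := fun k => (key h hh l hl k).2.1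
  have hCc0 : ∀ k, (starRingEnd ℂ) (invC h l k) ≠ 0 := by
    intro k hx
    apply hC0 k
    have := congrArg (starRingEnd ℂ) hx
    simpa [Complex.conj_conj] using this
  set b : ℤ → ℝ := bfun ρ with hbdef
  have hb0 : b 0 = 1 := bfun_zero ρ
  have hbpos : ∀ k, 0 < b k := bfun_pos ρ hρpos
  have hbs : ∀ k, b (k + 1) = ρ k * b k := bfun_succ ρ hρpos
  have hrel : ∀ k : ℤ, (invA h l k / Complex.sinh (h / 2 : ℂ)) * ((b (k + 1) : ℝ) : ℂ)
      = ((starRingEnd ℂ) (invC h l (k + 1)) / Complex.sinh (h / 2 : ℂ)) * ((b k : ℝ) : ℂ) := by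
    intro k
    rw [hρeq k, hbs k]
    push_cast
    ring
  have hrel2 : ∀ k : ℤ, ((starRingEnd ℂ) (invA h l k) / Complex.sinh (h / 2 : ℂ))
        * ((b (k + 1) : ℝ) : ℂ)
      = (invC h l (k + 1) / Complex.sinh (h / 2 : ℂ)) * ((b k : ℝ) : ℂ) := by
    intro k
    have := congrArg (starRingEnd ℂ) (hrel k)
    simpa [map_mul, map_div₀, hSr, Complex.conj_conj, Complex.conj_ofReal] using this
  -- properties of the canonical form
  have herm0 : ∀ u v, Bform b v u = (starRingEnd ℂ) (Bform b u v) := by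
    apply herm_ext
    intro i j
    rw [Bform_single, Bform_single]
    rcases eq_or_ne i j with rfl | hij
    · simp [Complex.conj_ofReal]
    · simp [hij, Ne.symm hij]
  have hone0 : Bform b (Finsupp.single 0 1) (Finsupp.single 0 1) = 1 := by
    rw [Bform_single]
    simp [hb0]
  have hinv1_0 : ∀ u v, Bform b (Xplus h l u) v = -Bform b u (Xminus h l v) := by
    apply inv_ext
    intro i j
    rw [Xplus_single, Xminus_single, Bform_single, Bform_single]
    rcases eq_or_ne j (i + 1) with rfl | hij
    · rw [if_pos rfl, if_pos (by ring)]
      simp only [mul_one, map_one, map_neg, map_mul, map_div₀, hSr, neg_neg, one_mul]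
      linear_combination hrel i
    · rw [if_neg (fun hc => hij hc.symm), if_neg (by intro hc; apply hij; omega)]
      simp
  have hinv2_0 : ∀ u v, Bform b (Xminus h l u) v = -Bform b u (Xplus h l v) := by
    apply inv_ext
    intro i j
    rw [Xminus_single, Xplus_single, Bform_single, Bform_single]
    rcases eq_or_ne i (j + 1) with rfl | hij
    · rw [if_pos (by ring), if_pos (by ring)]
      simp only [mul_one, map_one, map_neg, map_mul, map_div₀, hSr, neg_neg, one_mul]
      rw [show (j + 1 - 1 : ℤ) = j by ring]
      linear_combination hrel2 j
    · rw [if_neg (by intro hc; apply hij; omega), if_neg (by intro hc; apply hij; omega)]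
      simp
  have hH0 : ∀ u v, Bform b (Hop u) v = Bform b u (Hop v) := by
    apply inv_ext'
    intro i j
    rw [Hop_single, Hop_single, Bform_single, Bform_single]
    rcases eq_or_ne i j with rfl | hij
    · simp only [if_pos rfl, mul_one, one_mul, map_one, map_intCast]
    · simp [hij]
  -- uniqueness
  have main : ∀ B : (ℤ →₀ ℂ) →ₗ[ℂ] (ℤ →₀ ℂ) →ₛₗ[starRingEnd ℂ] ℂ,
      ((∀ u v : ℤ →₀ ℂ, B v u = (starRingEnd ℂ) (B u v)) ∧
       B (Finsupp.single 0 1) (Finsupp.single 0 1) = 1 ∧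
       (∀ u v : ℤ →₀ ℂ, B (Xplus h l u) v = -B u (Xminus h l v)) ∧
       (∀ u v : ℤ →₀ ℂ, B (Xminus h l u) v = -B u (Xplus h l v)) ∧
       (∀ u v : ℤ →₀ ℂ, B (Hop u) v = B u (Hop v))) → B = Bform b := by
    intro B hB
    obtain ⟨hherm, hone, hinv1, hinv2, hHinv⟩ := hB
    have hBdiag : ∀ i j : ℤ, i ≠ j →
        B (Finsupp.single i 1) (Finsupp.single j 1) = 0 := by
      intro i j hij
      have H := hHinv (Finsupp.single i 1) (Finsupp.single j 1)
      rw [Hop_single, Hop_single] at H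
      simp only [mul_one] at H
      rw [show (Finsupp.single i (((2 * i : ℤ) : ℂ)) : ℤ →₀ ℂ)
            = ((2 * i : ℤ) : ℂ) • Finsupp.single i (1 : ℂ) by
          rw [Finsupp.smul_single, smul_eq_mul, mul_one],
        show (Finsupp.single j (((2 * j : ℤ) : ℂ)) : ℤ →₀ ℂ)
            = ((2 * j : ℤ) : ℂ) • Finsupp.single j (1 : ℂ) by
          rw [Finsupp.smul_single, smul_eq_mul, mul_one],
        map_smul, LinearMap.smul_apply, LinearMap.map_smulₛₗ] at H
      simp only [smul_eq_mul, map_intCast] at H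
      have h2 : (((2 * i : ℤ) : ℂ) - ((2 * j : ℤ) : ℂ))
          * B (Finsupp.single i 1) (Finsupp.single j 1) = 0 := by
        linear_combination H
      rcases mul_eq_zero.1 h2 with h3 | h3
      · exfalso
        apply hij
        have : ((2 * i : ℤ) : ℂ) = ((2 * j : ℤ) : ℂ) := by linear_combination h3
        have : (2 * i : ℤ) = 2 * j := by exact_mod_cast this
        omega
      · exact h3
    have hBrec : ∀ m : ℤ, (invA h l m / Complex.sinh (h / 2 : ℂ))
          * B (Finsupp.single (m + 1) 1) (Finsupp.single (m + 1) 1)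
        = ((starRingEnd ℂ) (invC h l (m + 1)) / Complex.sinh (h / 2 : ℂ))
          * B (Finsupp.single m 1) (Finsupp.single m 1) := by
      intro m
      have H := hinv1 (Finsupp.single m 1) (Finsupp.single (m + 1) 1)
      rw [Xplus_single, Xminus_single] at H
      simp only [mul_one] at H
      rw [show ((m : ℤ) + 1 - 1) = m by ring] at H
      rw [show (Finsupp.single (m + 1) (invA h l m / Complex.sinh (h / 2 : ℂ)) : ℤ →₀ ℂ)
            = (invA h l m / Complex.sinh (h / 2 : ℂ)) • Finsupp.single (m + 1) (1 : ℂ) by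
          rw [Finsupp.smul_single, smul_eq_mul, mul_one], map_smul] at H
      rw [show (Finsupp.single m (-(invC h l (m + 1) / Complex.sinh (h / 2 : ℂ))) : ℤ →₀ ℂ)
            = (-(invC h l (m + 1) / Complex.sinh (h / 2 : ℂ))) • Finsupp.single m (1 : ℂ) by
          rw [Finsupp.smul_single, smul_eq_mul, mul_one], LinearMap.map_smulₛₗ] at H
      simp only [LinearMap.smul_apply, smul_eq_mul, map_neg, map_div₀, hSr] at H
      linear_combination H
    have hBval : ∀ k : ℤ,
        B (Finsupp.single k 1) (Finsupp.single k 1) = ((b k : ℝ) : ℂ) := by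
      have step_up : ∀ m : ℤ,
          B (Finsupp.single m 1) (Finsupp.single m 1) = ((b m : ℝ) : ℂ) →
          B (Finsupp.single (m + 1) 1) (Finsupp.single (m + 1) 1) = ((b (m + 1) : ℝ) : ℂ) := by
        intro m hm
        have H := hBrec m
        rw [hm, ← hrel m] at H
        exact mul_left_cancel₀ (div_ne_zero (hA0 m) hS0) H
      have step_down : ∀ m : ℤ,
          B (Finsupp.single (m + 1) 1) (Finsupp.single (m + 1) 1) = ((b (m + 1) : ℝ) : ℂ) →
          B (Finsupp.single m 1) (Finsupp.single m 1) = ((b m : ℝ) : ℂ) := by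
        intro m hm
        have H := hBrec m
        rw [hm, hrel m] at H
        exact mul_left_cancel₀ (div_ne_zero (hCc0 (m + 1)) hS0) H.symm
      intro k
      induction k using Int.induction_on with
      | zero => rw [hone]; exact_mod_cast congrArg (fun r : ℝ => ((r : ℝ) : ℂ)) hb0.symm
      | succ i ih => exact step_up i ih
      | pred i ih =>
        refine step_down (-(i : ℤ) - 1) ?_
        rw [show (-(i : ℤ) - 1) + 1 = -(i : ℤ) by ring]
        exact ih
    apply form_ext
    intro i j
    rcases eq_or_ne i j with rfl | hij
    · rw [hBval i, Bform_single]
      simp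
    · rw [hBdiag i j hij, Bform_single, if_neg hij]
  constructor
  · exact ⟨Bform b, ⟨herm0, hone0, hinv1_0, hinv2_0, hH0⟩, fun y hy => main y hy⟩
  · intro B hB
    rw [main B hB]
    constructor
    · intro i j hij
      rw [Bform_single, if_neg hij]
    · intro k
      refine ⟨b k, hbpos k, ?_⟩
      rw [Bform_single]
      simp
end
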